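/- (a) Every completely regular Hausdorff R₃-space is a βω-space. (b) Every compact Hausdorff βω-space is an R₃-space. -/

import Mathlib

universe u

open Set Filter Topology

/-- A subset `D` of `X` is C*-embedded if every bounded continuous real-valued function on
`D` extends continuously to `X`. -/
def CStarEmbedded {X : Type*} [TopologicalSpace X] (D : Set X) : Prop :=
  ∀ f : C(↥D, ℝ), (∃ M : ℝ, ∀ d : ↥D, |f d| ≤ M) →
    ∃ g : C(X, ℝ), ∀ d : ↥D, g ↑d = f d

/-- `X` is an R₃-space: any two separated countable discrete subsets of `X` have disjoint
closures. -/
def IsR3Space (X : Type*) [TopologicalSpace X] : Prop :=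
  ∀ A B : Set X, A.Countable → B.Countable →
    DiscreteTopology ↥A → DiscreteTopology ↥B →
    closure A ∩ B = ∅ → A ∩ closure B = ∅ → closure A ∩ closure B = ∅

/-- `X` is a βω-space (van Douwen): every countable discrete subset of `X` with compact
closure is C*-embedded in `X`. -/
def IsBetaOmegaSpace (X : Type*) [TopologicalSpace X] : Prop :=
  ∀ D : Set X, D.Countable → DiscreteTopology ↥D → IsCompact (closure D) →
    CStarEmbedded D

section Aux
variable {X : Type*} [TopologicalSpace X]

lemma discrete_exists_open' {S : Set X} (hS : DiscreteTopology ↥S) {x : X} (hx : x ∈ S) :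
    ∃ U : Set X, IsOpen U ∧ U ∩ S = {x} := by
  have h1 : IsOpen ({⟨x, hx⟩} : Set ↥S) := isOpen_discrete _
  rw [isOpen_induced_iff] at h1
  obtain ⟨U, hU, hU2⟩ := h1
  refine ⟨U, hU, ?_⟩
  ext y
  constructor
  · rintro ⟨hyU, hyS⟩
    have : (⟨y, hyS⟩ : ↥S) ∈ (Subtype.val ⁻¹' U : Set ↥S) := hyU
    rw [hU2] at this
    simpa using congrArg Subtype.val this
  · intro hy
    rw [mem_singleton_iff] at hy; subst hy
    have : (⟨y, hx⟩ : ↥S) ∈ (Subtype.val ⁻¹' U : Set ↥S) := by rw [hU2]; rfl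
    exact ⟨this, hx⟩

lemma sep_of_discrete {S A B : Set X} (hS : DiscreteTopology ↥S) (hA : A ⊆ S) (hB : B ⊆ S)
    (hAB : ∀ x, x ∈ B → x ∉ A) : closure A ∩ B = ∅ := by
  ext x
  simp only [mem_inter_iff, mem_empty_iff_false, iff_false, not_and]
  intro hxc hxB
  obtain ⟨U, hU, hUS⟩ := discrete_exists_open' hS (hB hxB)
  obtain ⟨a, haU, haA⟩ := mem_closure_iff.mp hxc U hU (by
    have : x ∈ U ∩ S := by rw [hUS]; rfl
    exact this.1)
  have : a ∈ U ∩ S := ⟨haU, hA haA⟩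
  rw [hUS] at this
  rw [mem_singleton_iff] at this
  exact hAB x hxB (this ▸ haA)

lemma stoneCechUnit_injective' {X : Type*} [TopologicalSpace X] [T2Space X]
    [CompletelyRegularSpace X] : Function.Injective (stoneCechUnit : X → StoneCech X) := by
  intro a b h
  by_contra hab
  obtain ⟨f, hf, hfa, hfb⟩ := CompletelyRegularSpace.completely_regular a {b}
    isClosed_singleton (by simpa using hab)
  have := eq_if_stoneCechUnit_eq hf h
  rw [hfa, hfb rfl] at this
  exact zero_ne_one (congrArg Subtype.val this)

theorem partA : ∀ (X : Type u) [TopologicalSpace X] [T2Space X] [CompletelyRegularSpace X],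
      IsR3Space X → IsBetaOmegaSpace X := by
  intro X _ _ _ hR3 D hDc hDdisc hKcomp f hfbd
  obtain ⟨M, hM⟩ := hfbd
  classical
  set K := closure D with hK
  -- the closed graph
  set G : Set (X × ℝ) := Set.range (fun d : ↥D => ((d : X), f d)) with hG
  set L := closure G with hL
  have hGsub : G ⊆ K ×ˢ Set.Icc (-M) M := by
    rintro p ⟨d, rfl⟩
    exact ⟨subset_closure d.2, abs_le.mp (hM d)⟩
  have hLsub : L ⊆ K ×ˢ Set.Icc (-M) M :=
    closure_minimal hGsub (hKcomp.isClosed.prod isClosed_Icc)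
  have hLcomp : IsCompact L :=
    (hKcomp.prod isCompact_Icc).of_isClosed_subset isClosed_closure hLsub
  -- density characterization
  have hmem : ∀ p ∈ L, ∀ U ∈ 𝓝 p.1, ∀ V ∈ 𝓝 p.2, ∃ d : ↥D, (d : X) ∈ U ∧ f d ∈ V := by
    intro p hp U hU V hV
    have : U ×ˢ V ∈ 𝓝 p := prod_mem_nhds hU hV
    obtain ⟨q, hq, hqG⟩ := mem_closure_iff_nhds.mp hp _ this
    obtain ⟨d, rfl⟩ := hqG
    exact ⟨d, hq.1, hq.2⟩
  -- injectivity of the first projection on L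
  have hinj : ∀ p q : X × ℝ, p ∈ L → q ∈ L → p.1 = q.1 → p = q := by
    intro p q hp hq hpq
    by_contra hne
    have hst : p.2 ≠ q.2 := by
      intro h2; exact hne (Prod.ext hpq h2)
    obtain ⟨S, T, hS, hT, hsS, htT, hST⟩ := t2_separation hst
    set A : Set X := Subtype.val '' (f ⁻¹' S ∩ univ : Set ↥D) with hA
    set B : Set X := Subtype.val '' (f ⁻¹' T ∩ univ : Set ↥D) with hB
    have hAD : A ⊆ D := by rintro x ⟨d, _, rfl⟩; exact d.2
    have hBD : B ⊆ D := by rintro x ⟨d, _, rfl⟩; exact d.2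
    have hABd : ∀ x, x ∈ B → x ∉ A := by
      rintro x ⟨d₁, hd₁, rfl⟩ ⟨d₂, hd₂, hd₂e⟩
      have : d₂ = d₁ := Subtype.ext hd₂e
      subst this
      exact hST.le_bot ⟨hd₂.1, hd₁.1⟩
    have hBAd : ∀ x, x ∈ A → x ∉ B := fun x hxA hxB => hABd x hxB hxA
    have hsep1 : closure A ∩ B = ∅ := sep_of_discrete hDdisc hAD hBD hABd
    have hsep2 : A ∩ closure B = ∅ := by
      rw [Set.inter_comm]
      exact sep_of_discrete hDdisc hBD hAD hBAd
    have hdisj := hR3 A B (hDc.mono hAD) (hDc.mono hBD)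
      (DiscreteTopology.of_subset hDdisc hAD) (DiscreteTopology.of_subset hDdisc hBD)
      hsep1 hsep2
    have hpA : p.1 ∈ closure A := by
      rw [mem_closure_iff_nhds]
      intro U hU
      obtain ⟨d, hdU, hdS⟩ := hmem p hp U hU S (hS.mem_nhds hsS)
      exact ⟨d, hdU, ⟨d, ⟨hdS, trivial⟩, rfl⟩⟩
    have hpB : p.1 ∈ closure B := by
      rw [mem_closure_iff_nhds]
      intro U hU
      obtain ⟨d, hdU, hdT⟩ := hmem q hq U (hpq ▸ hU) T (hT.mem_nhds htT)
      exact ⟨d, hdU, ⟨d, ⟨hdT, trivial⟩, rfl⟩⟩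
    have : p.1 ∈ closure A ∩ closure B := ⟨hpA, hpB⟩
    rw [hdisj] at this
    exact this
  -- surjectivity onto K
  have hsurjK : K ⊆ Prod.fst '' L := by
    apply closure_minimal
    · intro x hx
      exact ⟨(x, f ⟨x, hx⟩), subset_closure ⟨⟨x, hx⟩, rfl⟩, rfl⟩
    · exact (hLcomp.image continuous_fst).isClosed
  have hLsubK : ∀ p ∈ L, p.1 ∈ K := fun p hp => (hLsub hp).1
  -- homeomorphism L ≃ K
  haveI : CompactSpace ↥L := isCompact_iff_compactSpace.mp hLcomp
  let φ : ↥L → ↥K := fun p => ⟨(p : X × ℝ).1, hLsubK _ p.2⟩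
  have hφcont : Continuous φ :=
    (continuous_fst.comp continuous_subtype_val).subtype_mk _
  have hφbij : Function.Bijective φ := by
    constructor
    · intro p q hpq
      exact Subtype.ext (hinj _ _ p.2 q.2 (congrArg Subtype.val hpq))
    · rintro ⟨x, hx⟩
      obtain ⟨p, hpL, hpx⟩ := hsurjK hx
      exact ⟨⟨p, hpL⟩, Subtype.ext hpx⟩
  let e : ↥L ≃ ↥K := Equiv.ofBijective φ hφbij
  have hecont : Continuous e := hφcont
  let homeo : ↥L ≃ₜ ↥K := Continuous.homeoOfEquivCompactToT2 (f := e) hecont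
  let g₁ : C(↥K, ℝ) := ⟨fun k => ((homeo.symm k : ↥L) : X × ℝ).2,
    continuous_snd.comp (continuous_subtype_val.comp homeo.symm.continuous)⟩
  have hg₁ : ∀ d : ↥D, g₁ ⟨(d : X), subset_closure d.2⟩ = f d := by
    intro d
    have hpd : ((d : X), f d) ∈ L := subset_closure ⟨d, rfl⟩
    have heq : homeo ⟨((d : X), f d), hpd⟩ = ⟨(d : X), subset_closure d.2⟩ := rfl
    rw [← heq]
    show ((homeo.symm (homeo ⟨((d : X), f d), hpd⟩) : ↥L) : X × ℝ).2 = f d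
    rw [Homeomorph.symm_apply_apply]
  -- transfer to Stone-Čech
  let u : X → StoneCech X := stoneCechUnit
  have hucont : Continuous u := continuous_stoneCechUnit
  have huinj : Function.Injective u := stoneCechUnit_injective'
  have hKimg : IsCompact (u '' K) := hKcomp.image hucont
  haveI : CompactSpace ↥K := isCompact_iff_compactSpace.mp hKcomp
  let ψ : ↥K → ↥(u '' K) := fun k => ⟨u k, mem_image_of_mem _ k.2⟩
  have hψcont : Continuous ψ := (hucont.comp continuous_subtype_val).subtype_mk _
  have hψbij : Function.Bijective ψ := by
    constructor
    · intro a b hab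
      exact Subtype.ext (huinj (congrArg Subtype.val hab))
    · rintro ⟨y, x, hx, rfl⟩
      exact ⟨⟨x, hx⟩, rfl⟩
  let e₂ : ↥K ≃ ↥(u '' K) := Equiv.ofBijective ψ hψbij
  have he₂cont : Continuous e₂ := hψcont
  let homeo₂ : ↥K ≃ₜ ↥(u '' K) := Continuous.homeoOfEquivCompactToT2 (f := e₂) he₂cont
  let g₂ : C(↥(u '' K), ℝ) := g₁.comp ⟨homeo₂.symm, homeo₂.symm.continuous⟩
  obtain ⟨G₂, hG₂⟩ := g₂.exists_restrict_eq hKimg.isClosed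
  refine ⟨G₂.comp ⟨u, hucont⟩, ?_⟩
  intro d
  have hkd : (d : X) ∈ K := subset_closure d.2
  have h1 : G₂ (u (d : X)) = g₂ ⟨u (d : X), mem_image_of_mem _ hkd⟩ := by
    have := congrFun (congrArg DFunLike.coe hG₂) ⟨u (d : X), mem_image_of_mem _ hkd⟩
    rw [ContinuousMap.restrict_apply] at this
    exact this
  have h2 : homeo₂.symm ⟨u (d : X), mem_image_of_mem _ hkd⟩ = ⟨(d : X), hkd⟩ := by
    have : homeo₂ ⟨(d : X), hkd⟩ = ⟨u (d : X), mem_image_of_mem _ hkd⟩ := rfl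
    rw [← this, Homeomorph.symm_apply_apply]
  simp only [ContinuousMap.comp_apply, ContinuousMap.coe_mk]
  rw [h1]
  show g₁ (homeo₂.symm ⟨u (d : X), mem_image_of_mem _ hkd⟩) = f d
  rw [h2]
  exact hg₁ d

lemma discrete_exists_open2 {S : Set X} (hS : DiscreteTopology ↥S) {x : X} (hx : x ∈ S) :
    ∃ U : Set X, IsOpen U ∧ U ∩ S = {x} := by
  have h1 : IsOpen ({⟨x, hx⟩} : Set ↥S) := isOpen_discrete _
  rw [isOpen_induced_iff] at h1
  obtain ⟨U, hU, hU2⟩ := h1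
  refine ⟨U, hU, ?_⟩
  ext y
  constructor
  · rintro ⟨hyU, hyS⟩
    have : (⟨y, hyS⟩ : ↥S) ∈ (Subtype.val ⁻¹' U : Set ↥S) := hyU
    rw [hU2] at this
    simpa using congrArg Subtype.val this
  · rintro rfl
    have : (⟨y, hx⟩ : ↥S) ∈ (Subtype.val ⁻¹' U : Set ↥S) := by rw [hU2]; rfl
    exact ⟨this, hx⟩

lemma discrete_of_exists_open {S : Set X}
    (h : ∀ x ∈ S, ∃ U : Set X, IsOpen U ∧ U ∩ S = {x}) : DiscreteTopology ↥S := by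
  rw [discreteTopology_iff_isOpen_singleton]
  rintro ⟨x, hx⟩
  obtain ⟨U, hU, hUS⟩ := h x hx
  have : ({⟨x, hx⟩} : Set ↥S) = Subtype.val ⁻¹' U := by
    ext b
    simp only [mem_singleton_iff, mem_preimage]
    constructor
    · rintro rfl
      have : x ∈ U ∩ S := by rw [hUS]; rfl
      exact this.1
    · intro hbU
      have : (b : X) ∈ U ∩ S := ⟨hbU, b.2⟩
      rw [hUS] at this
      exact Subtype.ext this
  rw [this]
  exact hU.preimage continuous_subtype_val

theorem partB : ∀ (X : Type u) [TopologicalSpace X] [T2Space X] [CompactSpace X],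
      IsBetaOmegaSpace X → IsR3Space X := by
  intro X _ _ _ hβ A B hAc hBc hAd hBd hsep1 hsep2
  classical
  have hABdisj : ∀ x, x ∈ B → x ∉ A := by
    intro x hxB hxA
    have : x ∈ A ∩ closure B := ⟨hxA, subset_closure hxB⟩
    rw [hsep2] at this
    exact this
  set D := A ∪ B with hD
  have hDd : DiscreteTopology ↥D := by
    apply discrete_of_exists_open
    rintro x (hxA | hxB)
    · obtain ⟨U, hU, hUA⟩ := discrete_exists_open2 hAd hxA
      have hxnb : x ∉ closure B := by
        intro hc
        have : x ∈ A ∩ closure B := ⟨hxA, hc⟩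
        rw [hsep2] at this; exact this
      refine ⟨U ∩ (closure B)ᶜ, hU.inter isClosed_closure.isOpen_compl, ?_⟩
      ext y
      constructor
      · rintro ⟨⟨hyU, hyB⟩, hyA | hyB'⟩
        · have : y ∈ U ∩ A := ⟨hyU, hyA⟩
          rw [hUA] at this; exact this
        · exact absurd (subset_closure hyB') hyB
      · intro hy
        rw [mem_singleton_iff] at hy; subst hy
        have hxU : y ∈ U ∩ A := by rw [hUA]; rfl
        exact ⟨⟨hxU.1, hxnb⟩, Or.inl hxA⟩
    · obtain ⟨U, hU, hUB⟩ := discrete_exists_open2 hBd hxB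
      have hxna : x ∉ closure A := by
        intro hc
        have : x ∈ closure A ∩ B := ⟨hc, hxB⟩
        rw [hsep1] at this; exact this
      refine ⟨U ∩ (closure A)ᶜ, hU.inter isClosed_closure.isOpen_compl, ?_⟩
      ext y
      constructor
      · rintro ⟨⟨hyU, hyA⟩, hyA' | hyB'⟩
        · exact absurd (subset_closure hyA') hyA
        · have : y ∈ U ∩ B := ⟨hyU, hyB'⟩
          rw [hUB] at this; exact this
      · intro hy
        rw [mem_singleton_iff] at hy; subst hy
        have hxU : y ∈ U ∩ B := by rw [hUB]; rfl
        exact ⟨⟨hxU.1, hxna⟩, Or.inr hxB⟩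
  have hcomp : IsCompact (closure D) := isClosed_closure.isCompact
  obtain ⟨g, hg⟩ := hβ D (hAc.union hBc) hDd hcomp
    ⟨fun d => if (d : X) ∈ A then 0 else 1, continuous_of_discreteTopology⟩ ⟨1, by
      intro d
      simp only [ContinuousMap.coe_mk]
      split <;> norm_num⟩
  have hgA : ∀ x ∈ A, g x = 0 := by
    intro x hx
    have := hg ⟨x, Or.inl hx⟩
    simpa [hx] using this
  have hgB : ∀ x ∈ B, g x = 1 := by
    intro x hx
    have := hg ⟨x, Or.inr hx⟩
    simpa [hABdisj x hx] using this
  have hclA : closure A ⊆ g ⁻¹' {0} :=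
    closure_minimal (fun x hx => hgA x hx) ((isClosed_singleton).preimage g.continuous)
  have hclB : closure B ⊆ g ⁻¹' {1} :=
    closure_minimal (fun x hx => hgB x hx) ((isClosed_singleton).preimage g.continuous)
  ext x
  simp only [mem_inter_iff, mem_empty_iff_false, iff_false, not_and]
  intro hxA hxB
  have h0 : g x = 0 := hclA hxA
  have h1 : g x = 1 := hclB hxB
  rw [h0] at h1
  exact zero_ne_one h1

/-- (a) every completely regular Hausdorff R₃-space is a βω-space;
(b) every compact Hausdorff βω-space is an R₃-space. -/
theorem r3_betaOmega_relations :
    (∀ (X : Type u) [TopologicalSpace X] [T2Space X] [CompletelyRegularSpace X],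
      IsR3Space X → IsBetaOmegaSpace X) ∧
    (∀ (X : Type u) [TopologicalSpace X] [T2Space X] [CompactSpace X],
      IsBetaOmegaSpace X → IsR3Space X) :=
  ⟨partA, partB⟩

end Aux
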